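/- Let k be a nonzero integer, let R be a commutative ring in which the image of k is invertible, and let v be an element of R such that 1 − v is nilpotent (so that v is a unit of R). Then the evaluation t_k(v) of the Bott polynomial t_k at v is a unit of R. (Applied to R = ℤ[1/k] ⊗ K₀(X) and v = [L^∨] for a line bundle L on a scheme with an ample line bundle, this shows that the Bott class θ^k(L) = t_k([L^∨]) is invertible.) -/

import Mathlib

open LaurentPolynomial

lemma bott_aux_T_one_ne_one : (T 1 : LaurentPolynomial ℤ) ≠ 1 := by
  intro h
  rw [show (T 1 : LaurentPolynomial ℤ) = AddMonoidAlgebra.single (1 : ℤ) (1 : ℤ) from rfl,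
    ← LaurentPolynomial.single_zero_one_eq_one, AddMonoidAlgebra.single_inj] at h
  simp at h

lemma bott_aux_geom_sum_isUnit (n : ℕ) (R : Type*) [CommRing R]
    (hnR : IsUnit ((n : ℤ) : R)) (v : R) (hv : IsNilpotent (1 - v)) :
    IsUnit (∑ i ∈ Finset.range n, v ^ i) := by
  have h1 : IsNilpotent (v - 1) := by simpa using hv.neg
  have key : IsNilpotent ((∑ i ∈ Finset.range n, v ^ i) - (n : R)) := by
    have heq : (∑ i ∈ Finset.range n, v ^ i) - (n : R)
        = ∑ i ∈ Finset.range n, (v ^ i - 1) := by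
      rw [Finset.sum_sub_distrib]
      simp
    rw [heq, ← mem_nilradical]
    refine Ideal.sum_mem _ fun i _ => ?_
    have : v ^ i - 1 = (∑ j ∈ Finset.range i, v ^ j) * (v - 1) := by
      rw [geom_sum_mul]
    rw [this, mem_nilradical]
    exact (Commute.all _ _).isNilpotent_mul_left h1
  have hnR' : IsUnit ((n : R)) := by exact_mod_cast hnR
  have := key.isUnit_add_right_of_commute hnR' (Commute.all _ _)
  simpa using this

lemma bott_aux_geom_eq (n : ℕ) :
    (1 - T 1 : LaurentPolynomial ℤ) * (∑ i ∈ Finset.range n, T 1 ^ i)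
      = 1 - T (n : ℤ) := by
  have h := mul_geom_sum (T 1 : LaurentPolynomial ℤ) n
  have hpow : (T 1 : LaurentPolynomial ℤ) ^ n = T (n : ℤ) := by
    rw [T_pow, mul_one]
  calc (1 - T 1 : LaurentPolynomial ℤ) * (∑ i ∈ Finset.range n, T 1 ^ i)
      = -((T 1 - 1) * ∑ i ∈ Finset.range n, T 1 ^ i) := by ring
    _ = -(T 1 ^ n - 1) := by rw [h]
    _ = 1 - T (n : ℤ) := by rw [hpow]; ring

/-- Let `k` be a nonzero integer, `R` a commutative ring in which `k` is invertible, and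
`v ∈ R` with `1 - v` nilpotent. Then the evaluation `t_k(v)` of the Bott polynomial
(the unique Laurent polynomial with `(1 - T) * t_k = 1 - T^k`) at `v`, i.e. its image
under any ring homomorphism `ℤ[T,T⁻¹] → R` sending `T` to `v`, is a unit of `R`. -/
theorem bott_polynomial_eval_isUnit (k : ℤ) (hk : k ≠ 0)
    (R : Type*) [CommRing R] (hkR : IsUnit (k : R))
    (v : R) (hv : IsNilpotent (1 - v))
    (f : LaurentPolynomial ℤ →+* R) (hf : f (T 1) = v)
    (t : LaurentPolynomial ℤ) (ht : (1 - T 1) * t = 1 - T k) :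
    IsUnit (f t) := by
  have hT : (1 - T 1 : LaurentPolynomial ℤ) ≠ 0 :=
    sub_ne_zero.mpr (Ne.symm bott_aux_T_one_ne_one)
  rcases lt_or_gt_of_ne hk with hneg | hpos
  · -- k < 0
    set n : ℕ := (-k).toNat with hn
    have hnk : (n : ℤ) = -k := Int.toNat_of_nonneg (by omega)
    have hTk : (T (-k) : LaurentPolynomial ℤ) * T k = 1 := by
      rw [← T_add]; simp
    have key : (T (-k) : LaurentPolynomial ℤ) * t
        = -(∑ i ∈ Finset.range n, T 1 ^ i) := by
      apply mul_left_cancel₀ hT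
      have := bott_aux_geom_eq n
      rw [hnk] at this
      calc (1 - T 1 : LaurentPolynomial ℤ) * (T (-k) * t)
          = T (-k) * ((1 - T 1) * t) := by ring
        _ = T (-k) * (1 - T k) := by rw [ht]
        _ = T (-k) - T (-k) * T k := by ring
        _ = -(1 - T (-k)) := by rw [hTk]; ring
        _ = -((1 - T 1) * ∑ i ∈ Finset.range n, T 1 ^ i) := by rw [this]
        _ = (1 - T 1) * -(∑ i ∈ Finset.range n, T 1 ^ i) := by ring
    have hgeom : IsUnit (∑ i ∈ Finset.range n, v ^ i) := by
      refine bott_aux_geom_sum_isUnit n R ?_ v hv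
      rw [hnk]; push_cast; exact hkR.neg
    have hfT : ∀ i : ℕ, f (T (i : ℤ)) = v ^ i := fun i => by
      rw [← mul_one (i : ℤ), ← T_pow, map_pow, hf]
    have hmul : f (T (-k)) * f t = -(∑ i ∈ Finset.range n, v ^ i) := by
      rw [← map_mul, key, map_neg, map_sum]
      simp [map_pow, hf, hfT]
    exact isUnit_of_mul_isUnit_right (hmul ▸ hgeom.neg)
  · -- k > 0
    set n : ℕ := k.toNat with hn
    have hnk : (n : ℤ) = k := Int.toNat_of_nonneg (by omega)
    have key : t = ∑ i ∈ Finset.range n, T 1 ^ i := by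
      apply mul_left_cancel₀ hT
      rw [ht, bott_aux_geom_eq n, hnk]
    have hgeom : IsUnit (∑ i ∈ Finset.range n, v ^ i) := by
      refine bott_aux_geom_sum_isUnit n R ?_ v hv
      rw [hnk]; exact hkR
    have hfT : ∀ i : ℕ, f (T (i : ℤ)) = v ^ i := fun i => by
      rw [← mul_one (i : ℤ), ← T_pow, map_pow, hf]
    rw [key, map_sum]
    simpa [map_pow, hf, hfT] using hgeom
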